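/- arXiv:1412.4524 — 5 statements merged into one kernel-verified Lean document; each statement's English description precedes it below -/
import Mathlib

section
/- For any endomorphism φ of a group Π, any β ∈ Π, and any n ≥ 1, the map α ↦ α · (β φ(β) φ²(β) ⋯ φ^{n-1}(β))⁻¹ induces a bijection from the Reidemeister classes of φⁿ to the Reidemeister classes of (τ_β ∘ φ)ⁿ. Hence R(φⁿ) = R((τ_β ∘ φ)ⁿ) for all n. -/
variable {G : Type*} [Group G]

/-- The Reidemeister relation of an endomorphism `φ`: `b` is obtained from `a` by the
Reidemeister action `(γ, a) ↦ γ * a * (φ γ)⁻¹`. -/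
def ReidRel (φ : Monoid.End G) (a b : G) : Prop := ∃ γ : G, b = γ * a * (φ γ)⁻¹

/-- The Reidemeister relation is an equivalence relation. -/
def ReidSetoid (φ : Monoid.End G) : Setoid G where
  r := ReidRel φ
  iseqv := by
    constructor
    · intro x; exact ⟨1, by simp⟩
    · rintro x y ⟨γ, rfl⟩
      exact ⟨γ⁻¹, by simp [mul_assoc]⟩
    · rintro x y z ⟨γ, rfl⟩ ⟨δ, rfl⟩
      exact ⟨δ * γ, by simp [map_mul, mul_assoc]⟩

/-- The inner automorphism `τ_β : x ↦ β x β⁻¹` as a monoid endomorphism. -/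
def tauConj (β : G) : Monoid.End G := (MulAut.conj β).toMonoidHom

/-- `β φ(β) φ²(β) ⋯ φ^{n-1}(β)`. -/
def prodIter (φ : Monoid.End G) (β : G) (n : ℕ) : G :=
  ((List.range n).map (fun i => (φ ^ i) β)).prod

/-- `α φ^m(α) φ^{2m}(α) ⋯ φ^{(k-1)m}(α)` (`k` factors). -/
def boost (φ : Monoid.End G) (m k : ℕ) (α : G) : G :=
  ((List.range k).map (fun i => (φ ^ (i * m)) α)).prod

/-- A Reidemeister class of `φⁿ` is irreducible if it is not in the image of any
boosting map `ι_{m,n}` for a proper divisor `m` of `n`. -/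
def IrredClass (φ : Monoid.End G) (n : ℕ) (x : Quotient (ReidSetoid (φ ^ n))) : Prop :=
  ¬ ∃ m : ℕ, 0 < m ∧ m ∣ n ∧ m < n ∧ ∃ α : G,
      x = Quotient.mk (ReidSetoid (φ ^ n)) (boost φ m (n / m) α)

lemma pow_conj_eq (φ : Monoid.End G) (β : G) (n : ℕ) (x : G) :
    ((tauConj β * φ) ^ n) x = prodIter φ β n * (φ ^ n) x * (prodIter φ β n)⁻¹ := by
  induction n generalizing x with
  | zero => simp [prodIter]
  | succ n ih =>
      have h1 : ((tauConj β * φ) ^ (n+1)) x = ((tauConj β * φ) ^ n) (β * φ x * β⁻¹) := by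
        rw [pow_succ]; rfl
      have h2 : prodIter φ β (n+1) = prodIter φ β n * (φ ^ n) β := by
        simp [prodIter, List.range_succ]
      have h3 : (φ ^ (n+1)) x = (φ ^ n) (φ x) := by rw [pow_succ]; rfl
      rw [h1, ih, h2, h3]
      simp [map_mul, mul_assoc]

/-- for `n ≥ 1`, right multiplication by `(β φ(β) ⋯ φ^{n-1}(β))⁻¹` induces a
bijection from the Reidemeister classes of `φⁿ` to those of `(τ_β ∘ φ)ⁿ`;
hence `R(φⁿ) = R((τ_β ∘ φ)ⁿ)`. -/
theorem stmt_1 {G : Type*} [Group G] (φ : Monoid.End G) (β : G) (n : ℕ) (hn : 1 ≤ n) :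
    ∃ e : Quotient (ReidSetoid (φ ^ n)) ≃ Quotient (ReidSetoid ((tauConj β * φ) ^ n)),
      (∀ α : G, e (Quotient.mk (ReidSetoid (φ ^ n)) α) =
          Quotient.mk (ReidSetoid ((tauConj β * φ) ^ n)) (α * (prodIter φ β n)⁻¹)) ∧
      Nat.card (Quotient (ReidSetoid (φ ^ n))) =
        Nat.card (Quotient (ReidSetoid ((tauConj β * φ) ^ n))) := by
  set p := prodIter φ β n with hp
  have key : ∀ a b : G, ReidRel (φ ^ n) a b ↔
      ReidRel ((tauConj β * φ) ^ n) (a * p⁻¹) (b * p⁻¹) := by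
    intro a b
    constructor
    · rintro ⟨γ, rfl⟩
      refine ⟨γ, ?_⟩
      rw [pow_conj_eq, ← hp]
      group
    · rintro ⟨γ, h⟩
      refine ⟨γ, ?_⟩
      rw [pow_conj_eq, ← hp] at h
      have := congrArg (· * p) h
      simp only [mul_assoc, inv_mul_cancel, mul_one] at this
      rw [this]; group
  refine ⟨Quotient.congr (Equiv.mulRight p⁻¹) (fun a b => key a b), fun α => rfl, ?_⟩
  exact Nat.card_congr (Quotient.congr (Equiv.mulRight p⁻¹) (fun a b => key a b))
end

section
/- Let φ be an endomorphism of a group Π and let m divide n. Then the boosting function ι_{m,n} : R[φ^m] → R[φⁿ] sending the class of α to the class of α φ^m(α) φ^{2m}(α) ⋯ φ^{n-m}(α) is well-defined, i.e., independent of the choice of representative of the Reidemeister class. -/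
variable {G : Type*} [Group G]

lemma endPow_comp_apply (φ : Monoid.End G) (a b : ℕ) (x : G) :
    (φ ^ a) ((φ ^ b) x) = (φ ^ (a + b)) x := by
  rw [pow_add]; rfl

lemma boost_succ (φ : Monoid.End G) (m k : ℕ) (α : G) :
    boost φ m (k + 1) α = α * (φ ^ m) (boost φ m k α) := by
  rw [boost, boost, List.range_succ_eq_map, List.map_cons, List.prod_cons,
    map_list_prod (φ ^ m), List.map_map, List.map_map]
  congr 2
  · simp
  · congr 1
    funext i
    simp only [Function.comp_apply]
    rw [endPow_comp_apply]
    congr 2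
    simp [Nat.succ_mul, Nat.add_comm]

lemma boost_conj (φ : Monoid.End G) (m k : ℕ) (α γ : G) :
    boost φ m k (γ * α * ((φ ^ m) γ)⁻¹)
      = γ * boost φ m k α * ((φ ^ (k * m)) γ)⁻¹ := by
  induction k with
  | zero => simp [boost]
  | succ k ih =>
    rw [boost_succ, boost_succ, ih]
    simp only [map_mul, map_inv, endPow_comp_apply]
    have h1 : m + k * m = (k + 1) * m := by ring
    rw [h1]
    group

/-- for `0 < m` and `m ∣ n`, the boosting function
`ι_{m,n} : R[φ^m] → R[φⁿ]`, sending the class of `α` to the class of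
`α φ^m(α) φ^{2m}(α) ⋯ φ^{n-m}(α)`, is well defined (independent of representatives). -/
theorem stmt_2 {G : Type*} [Group G] (φ : Monoid.End G) (m n : ℕ)
    (hm : 0 < m) (hmn : m ∣ n) :
    ∃ ι : Quotient (ReidSetoid (φ ^ m)) → Quotient (ReidSetoid (φ ^ n)),
      ∀ α : G, ι (Quotient.mk (ReidSetoid (φ ^ m)) α) =
        Quotient.mk (ReidSetoid (φ ^ n)) (boost φ m (n / m) α) := by
  refine ⟨Quotient.lift (fun α => Quotient.mk (ReidSetoid (φ ^ n)) (boost φ m (n / m) α)) ?_,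
    fun α => rfl⟩
  rintro a b ⟨γ, rfl⟩
  apply Quotient.sound
  refine ⟨γ, ?_⟩
  rw [boost_conj]
  congr 3
  rw [Nat.div_mul_cancel hmn]
end

section
/- Let (R_k) be a sequence of non-negative integers with R_k = ∑_{i=1}^r ρ_i λ_i^k for distinct nonzero complex λ_i and nonzero integer ρ_i, and set λ = max_i |λ_i|. If λ > 1, then limsup_{k→∞} (log R_k)/k = log λ (with the convention that terms with R_k = 0 are avoided along the limsup, i.e., limsup_k R_k^{1/k} = λ). In particular, the radius of convergence R of the power series ∑_k (R_k/k) z^k satisfies 1/R = λ. -/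
open Filter

/-- if `R k = ∑ ρ_i λ_i^k` is a non-negative integer exponential sum and
`L = max |λ_i| > 1`, then `limsup R_k^{1/k} = L`; equivalently, by Cauchy–Hadamard, the
radius of convergence `𝖱` of `∑ (R_k/k) z^k` satisfies `1/𝖱 = L`. -/
theorem stmt_8 (r : ℕ) (ρ : Fin r → ℤ) (lam : Fin r → ℂ)
    (hinj : Function.Injective lam) (hlam : ∀ i, lam i ≠ 0) (hρ : ∀ i, ρ i ≠ 0)
    (R : ℕ → ℕ)
    (hR : ∀ k : ℕ, 1 ≤ k → (R k : ℂ) = ∑ i, (ρ i : ℂ) * lam i ^ k)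
    (L : ℝ) (hub : ∀ i, ‖lam i‖ ≤ L)
    (hmem : ∃ i, ‖lam i‖ = L) (hL : 1 < L) :
    Filter.limsup (fun k : ℕ => ((R k : ℝ)) ^ ((k : ℝ)⁻¹)) Filter.atTop = L := by
  obtain ⟨i₀, hi₀⟩ := hmem
  have hL0 : (0:ℝ) < L := lt_trans one_pos hL
  set f : ℕ → ℝ := fun k : ℕ => ((R k : ℝ)) ^ ((k : ℝ)⁻¹) with hfdef
  have hf0 : ∀ k, 0 ≤ f k := fun k => Real.rpow_nonneg (Nat.cast_nonneg _) _
  -- Upper bound constant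
  set B : ℝ := ∑ i, |(ρ i : ℝ)| with hBdef
  have hB1 : (1:ℝ) ≤ B := by
    calc (1:ℝ) ≤ |(ρ i₀ : ℝ)| := by
          rw [← Int.cast_abs]
          exact_mod_cast Int.one_le_abs (hρ i₀)
      _ ≤ B := Finset.single_le_sum (f := fun i => |(ρ i : ℝ)|) (fun i _ => abs_nonneg _) (Finset.mem_univ i₀)
  have hB0 : (0:ℝ) < B := lt_of_lt_of_le one_pos hB1
  -- Pointwise upper bound on R k
  have hRub : ∀ k : ℕ, 1 ≤ k → (R k : ℝ) ≤ B * L ^ k := by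
    intro k hk
    have : (R k : ℝ) = ‖(R k : ℂ)‖ := by
      rw [Complex.norm_natCast]
    rw [this, hR k hk]
    calc ‖∑ i, (ρ i : ℂ) * lam i ^ k‖
        ≤ ∑ i, ‖(ρ i : ℂ) * lam i ^ k‖ :=
          norm_sum_le _ _
      _ ≤ ∑ i, |(ρ i : ℝ)| * L ^ k := by
          refine Finset.sum_le_sum fun i _ => ?_
          rw [norm_mul, norm_pow, Complex.norm_intCast]
          exact mul_le_mul_of_nonneg_left
            (pow_le_pow_left₀ (norm_nonneg _) (hub i) k) (abs_nonneg _)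
      _ = B * L ^ k := by rw [← Finset.sum_mul]
  -- Vandermonde setup for the lower bound
  set M : Matrix (Fin r) (Fin r) ℂ := Matrix.vandermonde lam with hMdef
  have hdet : M.det ≠ 0 := Matrix.det_vandermonde_ne_zero_iff.mpr hinj
  have hMunit : IsUnit M.det := isUnit_iff_ne_zero.mpr hdet
  set a : Fin r → ℝ := fun j => ‖M⁻¹ j i₀‖ with hadef
  have ha0 : ∀ j, 0 ≤ a j := fun j => norm_nonneg _
  set A : ℝ := (∑ j : Fin r, a j) + 1 with hAdef
  have hA1 : (1:ℝ) ≤ A := le_add_of_nonneg_left (Finset.sum_nonneg fun j _ => ha0 j)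
  have hA0 : (0:ℝ) < A := lt_of_lt_of_le one_pos hA1
  -- Key lower bound: in every window of length r there is a large R value
  have key : ∀ k : ℕ, 1 ≤ k → ∃ j : Fin r, L ^ k / A ≤ (R (k + (j:ℕ)) : ℝ) := by
    intro k hk
    have hv : (fun i => (ρ i : ℂ) * lam i ^ k) =
        Matrix.vecMul (fun j : Fin r => ((R (k + (j:ℕ)) : ℕ) : ℂ)) M⁻¹ := by
      have h1 : Matrix.vecMul (fun i => (ρ i : ℂ) * lam i ^ k) M
          = fun j : Fin r => ((R (k + (j:ℕ)) : ℕ) : ℂ) := by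
        funext j
        rw [hR (k + j) (le_trans hk (Nat.le_add_right _ _))]
        simp only [Matrix.vecMul, dotProduct, hMdef, Matrix.vandermonde]
        exact Finset.sum_congr rfl fun i _ => by
          show (ρ i : ℂ) * lam i ^ k * lam i ^ (j:ℕ) = _
          rw [pow_add]; ring
      calc (fun i => (ρ i : ℂ) * lam i ^ k)
          = Matrix.vecMul (fun i => (ρ i : ℂ) * lam i ^ k) (M * M⁻¹) := by
            rw [Matrix.mul_nonsing_inv M hMunit, Matrix.vecMul_one]
        _ = Matrix.vecMul (Matrix.vecMul (fun i => (ρ i : ℂ) * lam i ^ k) M) M⁻¹ :=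
            (Matrix.vecMul_vecMul _ _ _).symm
        _ = _ := by rw [h1]
    have hlow : L ^ k ≤ ∑ j : Fin r, (R (k + (j:ℕ)) : ℝ) * a j := by
      have h2 : L ^ k ≤ ‖(ρ i₀ : ℂ) * lam i₀ ^ k‖ := by
        rw [norm_mul, norm_pow, hi₀, Complex.norm_intCast]
        have : (1:ℝ) ≤ |(ρ i₀ : ℝ)| := by
          rw [← Int.cast_abs]; exact_mod_cast Int.one_le_abs (hρ i₀)
        nlinarith [pow_pos hL0 k]
      have h3 : ‖(ρ i₀ : ℂ) * lam i₀ ^ k‖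
          ≤ ∑ j : Fin r, (R (k + (j:ℕ)) : ℝ) * a j := by
        have := congrFun hv i₀
        rw [this]
        simp only [Matrix.vecMul, dotProduct]
        calc ‖∑ j : Fin r, ((R (k + (j:ℕ)) : ℕ) : ℂ) * M⁻¹ j i₀‖
            ≤ ∑ j : Fin r, ‖((R (k + (j:ℕ)) : ℕ) : ℂ) * M⁻¹ j i₀‖ :=
              norm_sum_le _ _
          _ = ∑ j : Fin r, (R (k + (j:ℕ)) : ℝ) * a j := by
              refine Finset.sum_congr rfl fun j _ => ?_
              rw [norm_mul, Complex.norm_natCast, hadef]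
      exact le_trans h2 h3
    by_contra hcon
    push_neg at hcon
    have hsum : ∑ j : Fin r, (R (k + (j:ℕ)) : ℝ) * a j < L ^ k := by
      calc ∑ j : Fin r, (R (k + (j:ℕ)) : ℝ) * a j
          ≤ ∑ j : Fin r, (L ^ k / A) * a j :=
            Finset.sum_le_sum fun j _ =>
              mul_le_mul_of_nonneg_right (le_of_lt (hcon j)) (ha0 j)
        _ = (L ^ k / A) * ∑ j : Fin r, a j := by rw [Finset.mul_sum]
        _ < (L ^ k / A) * A := by
            refine mul_lt_mul_of_pos_left ?_ (div_pos (pow_pos hL0 k) hA0)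
            rw [hAdef]; linarith
        _ = L ^ k := div_mul_cancel₀ _ (ne_of_gt hA0)
    exact absurd hlow (not_le.mpr hsum)
  clear_value M a A
  clear hadef hAdef hMdef hdet hMunit ha0
  -- the sequence is bounded above eventually by B^(1/k) * L
  have hfg : ∀ᶠ k in atTop, f k ≤ B ^ ((k:ℝ)⁻¹) * L := by
    filter_upwards [Filter.eventually_ge_atTop 1] with k hk
    have hk0 : ((k:ℝ)) ≠ 0 := Nat.cast_ne_zero.mpr (by omega)
    have h1 : f k ≤ (B * L ^ k) ^ ((k:ℝ)⁻¹) :=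
      Real.rpow_le_rpow (Nat.cast_nonneg _) (hRub k hk) (by positivity)
    have h2 : (B * L ^ k) ^ ((k:ℝ)⁻¹) = B ^ ((k:ℝ)⁻¹) * L := by
      rw [Real.mul_rpow (le_of_lt hB0) (le_of_lt (pow_pos hL0 k)),
        ← Real.rpow_natCast L k, ← Real.rpow_mul (le_of_lt hL0),
        mul_inv_cancel₀ hk0, Real.rpow_one]
    exact h2 ▸ h1
  -- B^(1/k) → 1, so g → L
  have hB_tendsto : Tendsto (fun k : ℕ => B ^ ((k:ℝ)⁻¹)) atTop (nhds 1) := by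
    have h1 : Tendsto (fun k : ℕ => ((k:ℝ))⁻¹) atTop (nhds 0) :=
      tendsto_inv_atTop_nhds_zero_nat
    have h2 : ContinuousAt (fun x : ℝ => B ^ x) 0 :=
      Real.continuousAt_const_rpow (ne_of_gt hB0)
    have := h2.tendsto.comp h1
    rwa [Real.rpow_zero] at this
  have hg_tendsto : Tendsto (fun k : ℕ => B ^ ((k:ℝ)⁻¹) * L) atTop (nhds L) := by
    have := hB_tendsto.mul_const L
    rwa [one_mul] at this
  have hbddf : IsBoundedUnder (· ≤ ·) atTop f :=
    Filter.isBoundedUnder_of_eventually_le (a := B * L) <| by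
      filter_upwards [hfg, Filter.eventually_ge_atTop 1] with k hk hk1
      refine hk.trans (mul_le_mul_of_nonneg_right ?_ (le_of_lt hL0))
      calc B ^ ((k:ℝ)⁻¹) ≤ B ^ (1:ℝ) := by
            apply Real.rpow_le_rpow_of_exponent_le hB1
            rw [inv_le_one_iff₀]; right; exact_mod_cast hk1
        _ = B := Real.rpow_one B
  -- Upper bound on limsup
  have hupper : limsup f atTop ≤ L := by
    calc limsup f atTop ≤ limsup (fun k : ℕ => B ^ ((k:ℝ)⁻¹) * L) atTop :=
          Filter.limsup_le_limsup hfg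
            (Filter.isCoboundedUnder_le_of_le atTop hf0)
            hg_tendsto.isBoundedUnder_le
      _ = L := hg_tendsto.limsup_eq
  -- Lower bound on limsup
  have hlower : ∀ c : ℝ, 0 < c → c < L → c ≤ limsup f atTop := by
    intro c hc0 hcL
    set E : ℝ := A * L ^ r with hEdef
    have hLr : (1:ℝ) ≤ L ^ r := one_le_pow₀ (le_of_lt hL)
    have hE1 : (1:ℝ) ≤ E := by rw [hEdef]; nlinarith
    have hE0 : (0:ℝ) < E := lt_of_lt_of_le one_pos hE1
    -- frequently R n ≥ L^n / E with n ≥ 1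
    have hfreq : ∃ᶠ n in atTop, 1 ≤ n ∧ L ^ n / E ≤ (R n : ℝ) := by
      rw [Filter.frequently_atTop]
      intro N
      obtain ⟨j, hj⟩ := key (max N 1) (le_max_right N 1)
      refine ⟨max N 1 + j, le_trans (le_max_left N 1) (Nat.le_add_right _ _),
        le_trans (le_max_right N 1) (Nat.le_add_right _ _), ?_⟩
      refine le_trans ?_ hj
      rw [div_le_div_iff₀ hE0 hA0]
      calc L ^ (max N 1 + (j:ℕ)) * A ≤ L ^ (max N 1 + r) * A :=
            mul_le_mul_of_nonneg_right
              (pow_le_pow_right₀ (le_of_lt hL) (by omega)) (le_of_lt hA0)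
        _ = L ^ max N 1 * E := by rw [hEdef, pow_add]; ring
    -- eventually E^(1/n) ≤ L / c
    have hEc : L / c > 1 := (one_lt_div hc0).mpr hcL
    have hE_tendsto : Tendsto (fun n : ℕ => E ^ ((n:ℝ)⁻¹)) atTop (nhds 1) := by
      have h1 : Tendsto (fun n : ℕ => ((n:ℝ))⁻¹) atTop (nhds 0) :=
        tendsto_inv_atTop_nhds_zero_nat
      have h2 : ContinuousAt (fun x : ℝ => E ^ x) 0 :=
        Real.continuousAt_const_rpow (ne_of_gt hE0)
      have := h2.tendsto.comp h1
      rwa [Real.rpow_zero] at this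
    have hev : ∀ᶠ n : ℕ in atTop, E ^ ((n:ℝ)⁻¹) ≤ L / c :=
      hE_tendsto.eventually_le_const hEc
    have hfc : ∃ᶠ n in atTop, c ≤ f n := by
      refine (hfreq.and_eventually hev).mono ?_
      rintro n ⟨⟨hn1, hn2⟩, hn3⟩
      have hn0 : ((n:ℝ)) ≠ 0 := Nat.cast_ne_zero.mpr (by omega)
      have h1 : (L ^ n / E) ^ ((n:ℝ)⁻¹) ≤ f n :=
        Real.rpow_le_rpow (div_nonneg (le_of_lt (pow_pos hL0 n)) (le_of_lt hE0)) hn2 (inv_nonneg.mpr (Nat.cast_nonneg n))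
      have h2 : (L ^ n / E) ^ ((n:ℝ)⁻¹) = L / E ^ ((n:ℝ)⁻¹) := by
        rw [Real.div_rpow (le_of_lt (pow_pos hL0 n)) (le_of_lt hE0),
          ← Real.rpow_natCast L n, ← Real.rpow_mul (le_of_lt hL0),
          mul_inv_cancel₀ hn0, Real.rpow_one]
      have h3 : c ≤ L / E ^ ((n:ℝ)⁻¹) := by
        rw [le_div_iff₀ (Real.rpow_pos_of_pos hE0 _)]
        calc c * E ^ ((n:ℝ)⁻¹) ≤ c * (L / c) :=
              mul_le_mul_of_nonneg_left hn3 (le_of_lt hc0)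
          _ = L := by field_simp
      calc c ≤ L / E ^ ((n:ℝ)⁻¹) := h3
        _ = (L ^ n / E) ^ ((n:ℝ)⁻¹) := h2.symm
        _ ≤ f n := h1
    exact Filter.le_limsup_of_frequently_le hfc hbddf
  -- conclude
  refine le_antisymm hupper ?_
  by_contra hcon
  push_neg at hcon
  set s := limsup f atTop with hs
  have h1 : max s 1 < L := max_lt hcon hL
  set c : ℝ := (max s 1 + L) / 2 with hcdef
  have hc0 : 0 < c := by
    have : (1:ℝ) ≤ max s 1 := le_max_right s 1
    rw [hcdef]; linarith
  have hcL : c < L := by rw [hcdef]; linarith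
  have hsc : s < c := by
    have : s ≤ max s 1 := le_max_left s 1
    rw [hcdef]; linarith
  exact absurd (hlower c hc0 hcL) (not_le.mpr hsc)
end

section
/- Let p be a prime and A a square matrix with entries in the field 𝔽_p. Then there exists a positive integer k with gcd(p, k) = 1 such that tr(A^{k+i}) = tr(A^i) for all i ≥ 1. -/
/-- Matsuoka: for a prime `p` and a square matrix `A` over `𝔽_p`, there is
`k` coprime to `p` such that `tr(A^{k+i}) = tr(A^i)` for all `i ≥ 1`. -/
theorem stmt_10 (p n : ℕ) (hp : p.Prime) (A : Matrix (Fin n) (Fin n) (ZMod p)) :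
    ∃ k : ℕ, 0 < k ∧ Nat.Coprime p k ∧
      ∀ i : ℕ, 1 ≤ i → (A ^ (k + i)).trace = (A ^ i).trace := by
  haveI := Fact.mk hp
  -- trace Frobenius
  have htr : ∀ B : Matrix (Fin n) (Fin n) (ZMod p), (B ^ p).trace = B.trace := by
    intro B
    rw [ZMod.trace_pow_card, ZMod.pow_card]
  have htrm : ∀ (m j : ℕ), (A ^ (p ^ m * j)).trace = (A ^ j).trace := by
    intro m
    induction m with
    | zero => simp
    | succ m ih =>
      intro j
      have : p ^ (m + 1) * j = (p ^ m * j) * p := by ring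
      rw [this, pow_mul, htr, ih]
  -- pigeonhole: obtain s, k0 with A^(s+k0) = A^s
  have hper : ∃ s k0 : ℕ, 0 < k0 ∧ A ^ (s + k0) = A ^ s := by
    obtain ⟨a, b, hab, he⟩ := Finite.exists_ne_map_eq_of_infinite (fun i : ℕ => A ^ i)
    rcases Nat.lt_or_ge a b with h | h
    · exact ⟨a, b - a, by omega, by rw [show a + (b - a) = b by omega]; exact he.symm⟩
    · have h' : b < a := by omega
      exact ⟨b, a - b, by omega, by rw [show b + (a - b) = a by omega]; exact he⟩
  obtain ⟨s, k0, hk0, hAs⟩ := hper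
  -- periodicity for large exponents
  have hbig : ∀ c j : ℕ, s ≤ j → A ^ (j + c * k0) = A ^ j := by
    intro c
    induction c with
    | zero => simp
    | succ c ih =>
      intro j hj
      have h1 : j + (c + 1) * k0 = (j + c * k0) + k0 := by ring
      have h2 : (j + c * k0) + k0 = s + k0 + (j + c * k0 - s) := by omega
      have h3 : j + c * k0 = s + (j + c * k0 - s) := by omega
      rw [h1, h2, pow_add, hAs, ← pow_add, ← h3, ih j hj]
  set a := k0.factorization p with ha
  set k := k0 / p ^ a with hk
  have hksplit : p ^ a * k = k0 := Nat.ordProj_mul_ordCompl_eq_self k0 p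
  have hkpos : 0 < k := Nat.ordCompl_pos p (by omega)
  have hkcop : Nat.Coprime p k := Nat.coprime_ordCompl hp (by omega)
  refine ⟨k, hkpos, hkcop, ?_⟩
  intro i hi
  set m := max a s with hm
  have hps : s ≤ p ^ m := by
    have h1 : m < p ^ m := Nat.lt_pow_self (n := m) hp.one_lt
    have h2 : s ≤ m := le_max_right a s
    omega
  have hdvd : ∃ c, p ^ m * k = c * k0 := by
    refine ⟨p ^ (m - a), ?_⟩
    rw [← hksplit]
    rw [show p ^ (m - a) * (p ^ a * k) = (p ^ (m-a) * p ^ a) * k by ring, ← pow_add]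
    congr 2
    omega
  obtain ⟨c, hc⟩ := hdvd
  calc (A ^ (k + i)).trace = (A ^ (p ^ m * (k + i))).trace := (htrm m (k + i)).symm
    _ = (A ^ (p ^ m * i + c * k0)).trace := by rw [Nat.mul_add, Nat.add_comm (p^m*k), ← hc]
    _ = (A ^ (p ^ m * i)).trace := by
        rw [hbig c (p ^ m * i) (le_trans hps (Nat.le_mul_of_pos_right _ (by omega)))]
    _ = (A ^ i).trace := htrm m i
end

section
/- Let φ : ℤ → ℤ be the endomorphism φ(1) = −2. Then for each k ≥ 1 the Reidemeister classes of φ^k are the cosets n + (1 − (−2)^k)ℤ, so R(φ^k) = |1 − (−2)^k|, and the boosting map ι_{k,ℓ} : R[φ^k] → R[φ^ℓ] (for k | ℓ) sends the class of n to the class of ((1−(−2)^ℓ)/(1−(−2)^k))·n. Consequently, the set of heights of φ is ℕ \ {2}; in particular every class of φ² is reducible to a class of φ, while for every ℓ ≠ 2 there is an irreducible class in R[φ^ℓ]. -/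
/-- The Reidemeister relation for the endomorphism `m ↦ d * m` of `ℤ` (written
additively): `b` is Reidemeister-equivalent to `a` for `φ^k` iff
`b = m + a - d^k * m` for some `m`. -/
def ReidRelZ (d : ℤ) (k : ℕ) (a b : ℤ) : Prop := ∃ m : ℤ, b = m + a - d ^ k * m

/-- The boosting map `ι_{k,ℓ}` for the endomorphism `m ↦ d * m` of `ℤ`:
`n ↦ (1 + d^k + d^{2k} + ⋯ + d^{ℓ-k}) * n`. -/
def boostZ (d : ℤ) (k l : ℕ) (n : ℤ) : ℤ := (∑ i ∈ Finset.range (l / k), d ^ (i * k)) * n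

/-- A class `[n]^ℓ` is irreducible (has height `ℓ`) if it is not Reidemeister-equivalent
to a boosted class from any proper divisor `k` of `ℓ`. -/
def IrredZ (d : ℤ) (l : ℕ) (n : ℤ) : Prop :=
  ¬ ∃ k : ℕ, 0 < k ∧ k ∣ l ∧ k < l ∧ ∃ a : ℤ, ReidRelZ d l (boostZ d k l a) n

lemma reid_iff (d : ℤ) (k : ℕ) (a b : ℤ) :
    ReidRelZ d k a b ↔ (1 - d ^ k) ∣ (b - a) := by
  constructor
  · rintro ⟨m, rfl⟩; exact ⟨m, by ring⟩
  · rintro ⟨m, hm⟩; exact ⟨m, by linear_combination hm⟩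

lemma geom (d : ℤ) (k l : ℕ) (hkl : k ∣ l) :
    (1 - d ^ k) * (∑ i ∈ Finset.range (l / k), d ^ (i * k)) = 1 - d ^ l := by
  have h : ∀ i, d ^ (i * k) = (d ^ k) ^ i := fun i => by rw [← pow_mul, mul_comm]
  simp_rw [h]
  have hg := geom_sum_mul (d ^ k) (l / k)
  rw [← pow_mul, Nat.mul_div_cancel' hkl] at hg
  linear_combination -hg

lemma hne (k : ℕ) (hk : 0 < k) : (1 - (-2:ℤ) ^ k) ≠ 0 := by
  intro h
  have h2 : ((-2:ℤ)) ^ k = 1 := by linarith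
  have h3 : ((-2:ℤ) ^ k).natAbs = 1 := by rw [h2]; rfl
  rw [Int.natAbs_pow] at h3
  have h4 : (2:ℕ) ^ k = 1 := by simpa using h3
  have := Nat.one_lt_two_pow (n := k) (by omega)
  omega

lemma card_part (k : ℕ) (hk : 0 < k) :
    Nat.card (Quot (ReidRelZ (-2) k)) = (1 - (-2 : ℤ) ^ k).natAbs := by
  set n : ℕ := (1 - (-2:ℤ) ^ k).natAbs with hn
  haveI : NeZero n := ⟨by simpa [hn, Int.natAbs_eq_zero] using hne k hk⟩
  have key : ∀ a b : ℤ, ReidRelZ (-2) k a b ↔ ((a : ZMod n) = b) := by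
    intro a b
    rw [reid_iff, ZMod.intCast_eq_intCast_iff, Int.modEq_iff_dvd, ← Int.natAbs_dvd]
  have e : Quot (ReidRelZ (-2) k) ≃ ZMod n := by
    refine Equiv.ofBijective
      (Quot.lift (fun a => ((a : ZMod n))) (fun a b h => (key a b).mp h)) ⟨?_, ?_⟩
    · intro x y
      induction x using Quot.ind with | _ a =>
      induction y using Quot.ind with | _ b =>
      intro h
      exact Quot.sound ((key a b).mpr h)
    · intro z
      exact ⟨Quot.mk _ (ZMod.cast z : ℤ), ZMod.intCast_zmod_cast z⟩
  rw [Nat.card_congr e, Nat.card_zmod]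

lemma boost_eq (k l : ℕ) (hk : 0 < k) (hkl : k ∣ l) (n : ℤ) :
    boostZ (-2) k l n = ((1 - (-2 : ℤ) ^ l) / (1 - (-2 : ℤ) ^ k)) * n := by
  rw [boostZ, ← geom (-2) k l hkl, Int.mul_ediv_cancel_left _ (hne k hk)]

lemma red_two (n : ℤ) :
    ∃ k : ℕ, 0 < k ∧ k ∣ 2 ∧ k < 2 ∧ ∃ a : ℤ, ReidRelZ (-2) 2 (boostZ (-2) k 2 a) n := by
  refine ⟨1, one_pos, one_dvd 2, one_lt_two, -n, 0, ?_⟩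
  have : boostZ (-2) 1 2 (-n) = n := by
    simp [boostZ, Finset.sum_range_succ]
  rw [this]; ring

lemma abs_bounds (m : ℕ) :
    (2:ℤ) ^ m - 1 ≤ |1 - (-2:ℤ) ^ m| ∧ |1 - (-2:ℤ) ^ m| ≤ 2 ^ m + 1 := by
  have habs : |(-2:ℤ) ^ m| = 2 ^ m := by
    rw [abs_pow]; norm_num
  constructor
  · have := abs_sub_abs_le_abs_sub ((-2:ℤ) ^ m) 1
    rw [abs_sub_comm] at this
    simp only [habs, abs_one] at this
    linarith
  · have h := abs_sub (1:ℤ) ((-2:ℤ) ^ m)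
    rw [habs, abs_one] at h
    linarith

lemma irred_of (l : ℕ) (hl : 3 ≤ l) : IrredZ (-2) l 1 := by
  rintro ⟨k, hk, hkl, hklt, a, hre⟩
  set S : ℤ := ∑ i ∈ Finset.range (l / k), (-2:ℤ) ^ (i * k) with hS
  have hrd : (1 - (-2:ℤ) ^ l) ∣ (1 - S * a) := by
    have := (reid_iff (-2) l (boostZ (-2) k l a) 1).mp hre
    simpa [boostZ, ← hS] using this
  have hgeom := geom (-2) k l hkl
  have hSd1 : S ∣ 1 := by
    have h1 : S ∣ (1 - S * a) := (dvd_mul_left S _).trans (hgeom ▸ hrd)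
    have h2 : S ∣ S * a := dvd_mul_right S a
    have := dvd_add h1 h2
    simpa using this
  have hSabs : |S| = 1 := by
    rcases Int.isUnit_iff.mp (isUnit_of_dvd_one hSd1) with h | h <;> simp [h]
  have habs_eq : |1 - (-2:ℤ) ^ l| = |1 - (-2:ℤ) ^ k| := by
    rw [← hgeom, abs_mul, hSabs, mul_one]
  have b1 := (abs_bounds l).1
  have b2 := (abs_bounds k).2
  have hkle : k ≤ l - 1 := by omega
  have p1 : (2:ℤ) ^ k ≤ 2 ^ (l - 1) := pow_le_pow_right₀ (by norm_num) hkle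
  have p2 : (2:ℤ) ^ l = 2 * 2 ^ (l - 1) := by
    rw [← pow_succ']
    congr 1
    omega
  have p3 : (4:ℤ) ≤ 2 ^ (l - 1) := by
    calc (4:ℤ) = 2 ^ 2 := by norm_num
    _ ≤ 2 ^ (l - 1) := pow_le_pow_right₀ (by norm_num) (by omega)
  linarith


/-- for `φ : ℤ → ℤ`, `φ(1) = -2`, the Reidemeister classes of `φ^k` are the
cosets `n + (1 - (-2)^k)ℤ`, so `R(φ^k) = |1 - (-2)^k|`; the boosting map sends the class
of `n` to the class of `((1-(-2)^ℓ)/(1-(-2)^k)) * n`; and the set of heights of `φ` is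
`ℕ \ {2}`. -/
theorem stmt_17 :
    (∀ k : ℕ, 0 < k → ∀ a b : ℤ,
      (ReidRelZ (-2) k a b ↔ (1 - (-2 : ℤ) ^ k) ∣ (b - a))) ∧
    (∀ k : ℕ, 0 < k →
      Nat.card (Quot (ReidRelZ (-2) k)) = (1 - (-2 : ℤ) ^ k).natAbs) ∧
    (∀ k l : ℕ, 0 < k → k ∣ l → ∀ n : ℤ,
      boostZ (-2) k l n = ((1 - (-2 : ℤ) ^ l) / (1 - (-2 : ℤ) ^ k)) * n) ∧
    (∀ l : ℕ, 0 < l → ((∃ n : ℤ, IrredZ (-2) l n) ↔ l ≠ 2)) := by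
  refine ⟨fun k _ a b => reid_iff (-2) k a b, card_part,
    fun k l hk hkl n => boost_eq k l hk hkl n, fun l hl => ⟨?_, ?_⟩⟩
  · rintro ⟨n, hn⟩ rfl
    exact hn (red_two n)
  · intro hl2
    refine ⟨1, ?_⟩
    rcases Nat.lt_or_ge l 3 with h | h
    · interval_cases l
      · rintro ⟨k, hk, -, hklt, -⟩; omega
      · omega
    · exact irred_of l h
  -- l = 1 case handled? interval_cases l gives l = 1 (since 0 < l, l ≠ 2, l < 3)
end
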